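/- Let g be a Lie algebra, {δ_a} elements of an algebra A (graded-commutative, with Leibniz bracket {−,−} satisfying the right graded Leibniz rule and the identity {E,{G,H}} = {{E,G},H} − {{E,H},G} for g-degree-zero G,H) with {δ_a, δ_b} = C^c_{ab} δ_c. Define ϱ(ξ_a) on A ∧ Λ*(W) by (F ∧ 1)ϱ(ξ_a) := {F, δ_a} ∧ 1 and (F ∧ w_b)ϱ(ξ_a) := F ∧ C^c_{ba} w_c + {F, δ_a} ∧ w_b. Then ϱ is a right representation of g: ϱ([ξ_a, ξ_b]) = ϱ(ξ_a)ϱ(ξ_b) − ϱ(ξ_b)ϱ(ξ_a) (composition on the right). -/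

import Mathlib

/-- Let `g` be a Lie algebra with basis `{ξ_a}` and
structure constants `C` (`⁅ξ_a,ξ_b⁆ = C^c_{ab} ξ_c`), and let `A` be a
graded-commutative algebra (realised as a subalgebra `Asub` of an ambient
algebra `B ⊇ A ∧ Λ*(W)`) carrying a Leibniz bracket `{-,-} = P` satisfying the
right graded Leibniz rule and the identity
`{E,{G,H}} = {{E,G},H} - {{E,H},G}` for `g`-degree-zero `G`, `H`.
Let `δ : g → A` be linear with `δ([ξ,ζ]) = {δ(ξ),δ(ζ)}` (so
`{δ_a, δ_b} = C^c_{ab} δ_c`), all `δ_a` of Leibniz degree `0`, and let `W` be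
free on generators `w_a` with `{w_a,w_b}^W = C^c_{ab} w_c`.  Define `ϱ(ξ_a)` on
`A ∧ Λ*(W)` by `(F ∧ 1)ϱ(ξ_a) := {F,δ_a} ∧ 1` and
`(F ∧ w_b)ϱ(ξ_a) := F ∧ {w_b,w_a}^W + {F,δ_a} ∧ w_b`.  Then `ϱ` is a right
representation of `g`:
`ϱ([ξ_a,ξ_b]) = ϱ(ξ_a)ϱ(ξ_b) - ϱ(ξ_b)ϱ(ξ_a)` (composition on the right). -/
theorem rho_is_right_representation
    (m : ℕ)
    (g : Type*) [LieRing g] [LieAlgebra ℝ g]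
    (ξ : Module.Basis (Fin m) ℝ g)
    (C : Fin m → Fin m → Fin m → ℝ)
    (hC : ∀ a b, ⁅ξ a, ξ b⁆ = ∑ c, C a b c • ξ c)
    (B : Type*) [Ring B] [Algebra ℝ B]
    (Asub : Subalgebra ℝ B)                    -- the algebra A, inside B
    (w : Fin m → B)                            -- the generators of Λ*(W)
    (P : B →ₗ[ℝ] B →ₗ[ℝ] B)                   -- the Leibniz bracket {-,-}
    (δ : g →ₗ[ℝ] B)
    (hδmem : ∀ ζ : g, δ ζ ∈ Asub)
    (hδhom : ∀ ζ η : g, δ ⁅ζ, η⁆ = P (δ ζ) (δ η))   -- δ[ξ,ζ] = {δξ, δζ}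
    (hPmem : ∀ F ∈ Asub, ∀ ζ : g, P F (δ ζ) ∈ Asub)
    -- the double-bracket identity {E,{G,H}} = {{E,G},H} - {{E,H},G}
    -- (valid since the δ's have Leibniz degree 0)
    (hLem : ∀ F ∈ Asub, ∀ ζ η : g,
      P F (P (δ ζ) (δ η)) = P (P F (δ ζ)) (δ η) - P (P F (δ η)) (δ ζ))
    (ϱ : Fin m → B →ₗ[ℝ] B)
    -- (F ∧ 1) ϱ(ξ_a) = {F, δ_a} ∧ 1
    (hϱ1 : ∀ a, ∀ F ∈ Asub, ϱ a F = P F (δ (ξ a)))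
    -- (F ∧ w_b) ϱ(ξ_a) = F ∧ {w_b, w_a}^W + {F, δ_a} ∧ w_b
    (hϱ2 : ∀ a b, ∀ F ∈ Asub,
      ϱ a (F * w b) = F * (∑ c, C b a c • w c) + P F (δ (ξ a)) * w b) :
    -- ϱ([ξ_a, ξ_b]) = ϱ(ξ_a)ϱ(ξ_b) - ϱ(ξ_b)ϱ(ξ_a), composition on the right,
    -- checked on the generators F ∧ 1 and F ∧ w_e of A ∧ Λ*(W):
    ∀ a b, ∀ F ∈ Asub,
      ((∑ c, C a b c • ϱ c F) = ϱ b (ϱ a F) - ϱ a (ϱ b F))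
      ∧ ∀ e, (∑ c, C a b c • ϱ c (F * w e))
          = ϱ b (ϱ a (F * w e)) - ϱ a (ϱ b (F * w e)) := by

  -- helper : bracket commutes with finite sums
  have lsum : ∀ (x : g) (f : Fin m → g), ⁅x, ∑ c, f c⁆ = ∑ c, ⁅x, f c⁆ := by
    intro x f
    have h := map_sum (LieAlgebra.ad ℝ g x) f Finset.univ
    simp only [LieAlgebra.ad_apply] at h
    exact h
  have slum : ∀ (y : g) (f : Fin m → g), ⁅∑ c, f c, y⁆ = ∑ c, ⁅f c, y⁆ := by
    intro y f
    rw [← lie_skew, lsum, ← Finset.sum_neg_distrib]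
    simp [lie_skew]
  -- scalar Jacobi identity for the structure constants
  have hJ : ∀ a b e d, ∑ c, C a b c * C e c d
      = ∑ c, C e a c * C c b d - ∑ c, C e b c * C c a d := by
    intro a b e d
    have h1 : ⁅ξ e, ⁅ξ a, ξ b⁆⁆ = ⁅⁅ξ e, ξ a⁆, ξ b⁆ - ⁅⁅ξ e, ξ b⁆, ξ a⁆ := by
      rw [leibniz_lie, ← lie_skew (⁅ξ e, ξ b⁆) (ξ a)]
      abel
    have h2 : (∑ c, C a b c • (∑ d', C e c d' • ξ d'))
        = ∑ c, C e a c • (∑ d', C c b d' • ξ d')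
          - ∑ c, C e b c • (∑ d', C c a d' • ξ d') := by
      calc (∑ c, C a b c • (∑ d', C e c d' • ξ d'))
          = ⁅ξ e, ⁅ξ a, ξ b⁆⁆ := by
            rw [hC a b, lsum]; simp_rw [lie_smul, hC]
        _ = ⁅⁅ξ e, ξ a⁆, ξ b⁆ - ⁅⁅ξ e, ξ b⁆, ξ a⁆ := h1
        _ = _ := by
            rw [hC e a, hC e b, slum, slum]; simp_rw [smul_lie, hC]
    have h3 := congrArg (fun x => ξ.repr x d) h2
    simpa [Finsupp.single_apply, Finset.mul_sum, mul_comm] using h3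
  -- double-sum expansion helper in B
  have expand : ∀ (r : Fin m → ℝ) (s : Fin m → Fin m → ℝ),
      (∑ c, r c • (∑ d, s c d • w d)) = ∑ d, (∑ c, r c * s c d) • w d := by
    intro r s
    simp_rw [Finset.smul_sum, smul_smul]
    rw [Finset.sum_comm]
    simp_rw [← Finset.sum_smul]
  -- the Jacobi identity transported to B
  have hT : ∀ a b e, (∑ c, C a b c • (∑ d, C e c d • w d))
      = (∑ c, C e a c • (∑ d, C c b d • w d))
        - (∑ c, C e b c • (∑ d, C c a d • w d)) := by
    intro a b e
    rw [expand, expand, expand, ← Finset.sum_sub_distrib]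
    refine Finset.sum_congr rfl fun d _ => ?_
    rw [← sub_smul, hJ a b e d]
  intro a b F hF
  -- the bracket identity on A
  have hP : ∀ a b, (∑ c, C a b c • P F (δ (ξ c)))
      = P (P F (δ (ξ a))) (δ (ξ b)) - P (P F (δ (ξ b))) (δ (ξ a)) := by
    intro a b
    have h1 : (∑ c, C a b c • P F (δ (ξ c))) = P F (δ ⁅ξ a, ξ b⁆) := by
      rw [hC, map_sum, map_sum]
      simp
    rw [h1, hδhom, hLem F hF]
  refine ⟨?_, ?_⟩
  · calc (∑ c, C a b c • ϱ c F) = ∑ c, C a b c • P F (δ (ξ c)) := by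
          simp_rw [hϱ1 _ F hF]
      _ = P (P F (δ (ξ a))) (δ (ξ b)) - P (P F (δ (ξ b))) (δ (ξ a)) := hP a b
      _ = ϱ b (ϱ a F) - ϱ a (ϱ b F) := by
          rw [hϱ1 a F hF, hϱ1 b F hF,
            hϱ1 b _ (hPmem F hF (ξ a)), hϱ1 a _ (hPmem F hF (ξ b))]
  · intro e
    -- expansion of ϱ b (ϱ a (F * w e))
    have step : ∀ a b, ϱ b (ϱ a (F * w e))
        = (∑ c, C e a c • (F * (∑ d, C c b d • w d)))
          + P F (δ (ξ b)) * (∑ c, C e a c • w c)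
          + P F (δ (ξ a)) * (∑ c, C e b c • w c)
          + P (P F (δ (ξ a))) (δ (ξ b)) * w e := by
      intro a b
      rw [hϱ2 a e F hF, map_add]
      have h1 : F * (∑ c, C e a c • w c) = ∑ c, C e a c • (F * w c) := by
        rw [Finset.mul_sum]; simp_rw [mul_smul_comm]
      rw [h1, map_sum]
      simp_rw [map_smul, hϱ2 b _ F hF]
      rw [hϱ2 b e _ (hPmem F hF (ξ a))]
      simp_rw [smul_add]
      rw [Finset.sum_add_distrib]
      have h2 : (∑ c, C e a c • (P F (δ (ξ b)) * w c))
          = P F (δ (ξ b)) * (∑ c, C e a c • w c) := by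
        rw [Finset.mul_sum]; simp_rw [mul_smul_comm]
      rw [h2]
      abel
    have hmul : ∀ (r : Fin m → ℝ) (v : Fin m → B),
        F * (∑ c, r c • v c) = ∑ c, r c • (F * v c) := by
      intro r v
      rw [Finset.mul_sum]; simp_rw [mul_smul_comm]
    calc (∑ c, C a b c • ϱ c (F * w e))
        = (∑ c, C a b c • (F * (∑ d, C e c d • w d)))
            + (∑ c, C a b c • P F (δ (ξ c))) * w e := by
          simp_rw [hϱ2 _ e F hF, smul_add]
          rw [Finset.sum_add_distrib, Finset.sum_mul]
          simp_rw [smul_mul_assoc]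
      _ = F * ((∑ c, C e a c • (∑ d, C c b d • w d))
              - (∑ c, C e b c • (∑ d, C c a d • w d)))
            + (P (P F (δ (ξ a))) (δ (ξ b)) - P (P F (δ (ξ b))) (δ (ξ a))) * w e := by
          rw [hP a b]
          congr 1
          rw [← hT a b e, ← hmul]
      _ = ϱ b (ϱ a (F * w e)) - ϱ a (ϱ b (F * w e)) := by
          rw [step a b, step b a, mul_sub, hmul, hmul, sub_mul]
          abel
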